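/- There exists a constant C > 0 such that for every real f ≥ 1 and all integers w₁, w₂ ≥ 0 with w₁ + w₂ ≥ 1: ( (w₁+w₂)! / (w₁! · w₂!) ) · f^{(w₁+w₂+1)/2} · ∏_{k=1}^{w₁+w₂} (f + 2k)^{−1} ≤ C · 2^{−(w₁+w₂−1)/2}. -/

import Mathlib

noncomputable section

lemma aux_amgm (f : ℝ) (hf : 1 ≤ f) :
    (2:ℝ) ^ ((3:ℝ)/2) * f ^ ((1:ℝ)/2) ≤ f + 2 := by
  have hf0 : (0:ℝ) < f := lt_of_lt_of_le one_pos hf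
  set a := f ^ ((1:ℝ)/2) with ha
  set b := (2:ℝ) ^ ((3:ℝ)/2) with hb
  have ha2 : a ^ 2 = f := by
    rw [ha, ← Real.rpow_natCast (f ^ ((1:ℝ)/2)) 2, ← Real.rpow_mul hf0.le]
    norm_num
  have hb2 : b ^ 2 = 8 := by
    rw [hb, ← Real.rpow_natCast ((2:ℝ) ^ ((3:ℝ)/2)) 2, ← Real.rpow_mul (by norm_num : (0:ℝ) ≤ 2)]
    norm_num
  nlinarith [sq_nonneg (a - b/2), sq_nonneg a, sq_nonneg b,
    Real.rpow_nonneg (by norm_num : (0:ℝ) ≤ 2) ((3:ℝ)/2),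
    Real.rpow_nonneg hf0.le ((1:ℝ)/2)]

lemma choose_le_two_pow' (m k : ℕ) : m.choose k ≤ 2 ^ m := by
  rcases le_or_gt k m with h | h
  · calc m.choose k ≤ ∑ i ∈ Finset.range (m+1), m.choose i :=
        Finset.single_le_sum (fun i _ => Nat.zero_le _)
          (Finset.mem_range.2 (Nat.lt_succ_of_le h))
      _ = 2 ^ m := Nat.sum_range_choose m
  · simp [Nat.choose_eq_zero_of_lt h]

theorem factorial_power_product_bound :
    ∃ C > (0 : ℝ), ∀ f : ℝ, 1 ≤ f → ∀ w₁ w₂ : ℕ, 1 ≤ w₁ + w₂ →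
      ((w₁ + w₂).factorial : ℝ) / ((w₁.factorial : ℝ) * (w₂.factorial : ℝ)) *
          f ^ (((w₁ : ℝ) + (w₂ : ℝ) + 1) / 2) *
          ∏ k ∈ Finset.Icc 1 (w₁ + w₂), (f + 2 * (k : ℝ))⁻¹ ≤
        C * (2 : ℝ) ^ (-((w₁ : ℝ) + (w₂ : ℝ) - 1) / 2) := by
  refine ⟨2, two_pos, ?_⟩
  intro f hf w₁ w₂ hw
  have hf0 : (0:ℝ) < f := lt_of_lt_of_le one_pos hf
  obtain ⟨n, hn⟩ : ∃ n, w₁ + w₂ = n + 1 := ⟨w₁ + w₂ - 1, by omega⟩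
  set M : ℝ := (w₁ : ℝ) + (w₂ : ℝ) with hM
  have hMn : M = (n : ℝ) + 1 := by
    rw [hM, ← Nat.cast_add, hn]; push_cast; ring
  -- binomial bound
  have hfact : ((w₁ + w₂).factorial : ℝ) / ((w₁.factorial : ℝ) * (w₂.factorial : ℝ))
      = ((w₁ + w₂).choose w₁ : ℝ) := by
    have h := Nat.add_choose_mul_factorial_mul_factorial w₁ w₂
    field_simp
    have hs : (w₁ + w₂).choose w₂ = (w₁ + w₂).choose w₁ := by
      have h2 := Nat.choose_symm (Nat.le_add_right w₁ w₂)
      simpa using h2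
    have h' : (w₁ + w₂).factorial = (w₁ + w₂).choose w₁ * (w₁.factorial * w₂.factorial) := by
      rw [← h, hs]; ring
    exact_mod_cast h'.trans (Nat.mul_comm _ _)
  have hbin : ((w₁ + w₂).factorial : ℝ) / ((w₁.factorial : ℝ) * (w₂.factorial : ℝ))
      ≤ (2:ℝ) ^ M := by
    rw [hfact]
    calc ((w₁ + w₂).choose w₁ : ℝ) ≤ ((2:ℕ) ^ (w₁+w₂) : ℕ) := by
          exact_mod_cast choose_le_two_pow' (w₁+w₂) w₁
      _ = (2:ℝ) ^ M := by
          rw [hM]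
          push_cast
          rw [← Real.rpow_natCast 2 (w₁+w₂)]
          push_cast
          ring_nf
  -- product lower bound
  have hprodpos : ∀ i ∈ Finset.Icc 1 (w₁+w₂), (0:ℝ) < f + 2 * (i:ℝ) := by
    intro i _; positivity
  have hprod : (2:ℝ) ^ (3*(M-1)/2) * f ^ ((M+1)/2)
      ≤ ∏ k ∈ Finset.Icc 1 (w₁ + w₂), (f + 2 * (k : ℝ)) := by
    rw [hn, Finset.prod_Icc_succ_top (Nat.le_add_left 1 n)]
    have h1 : ((2:ℝ) ^ ((3:ℝ)/2) * f ^ ((1:ℝ)/2)) ^ n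
        ≤ ∏ k ∈ Finset.Icc 1 n, (f + 2 * (k : ℝ)) := by
      have hcard : (Finset.Icc 1 n).card = n := by simp
      calc ((2:ℝ) ^ ((3:ℝ)/2) * f ^ ((1:ℝ)/2)) ^ n
          = ∏ _k ∈ Finset.Icc 1 n, ((2:ℝ) ^ ((3:ℝ)/2) * f ^ ((1:ℝ)/2)) := by
            rw [Finset.prod_const, hcard]
        _ ≤ ∏ k ∈ Finset.Icc 1 n, (f + 2 * (k : ℝ)) := by
            refine Finset.prod_le_prod (fun i _ => by positivity) (fun i hi => ?_)
            have hi1 : (1:ℝ) ≤ (i:ℝ) := by exact_mod_cast (Finset.mem_Icc.1 hi).1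
            calc (2:ℝ) ^ ((3:ℝ)/2) * f ^ ((1:ℝ)/2) ≤ f + 2 := aux_amgm f hf
              _ ≤ f + 2 * i := by linarith
    have heq : ((2:ℝ) ^ ((3:ℝ)/2) * f ^ ((1:ℝ)/2)) ^ n * f
        = (2:ℝ) ^ (3*(M-1)/2) * f ^ ((M+1)/2) := by
      rw [hMn, mul_pow, ← Real.rpow_natCast ((2:ℝ) ^ ((3:ℝ)/2)) n,
        ← Real.rpow_natCast (f ^ ((1:ℝ)/2)) n,
        ← Real.rpow_mul (by norm_num : (0:ℝ) ≤ 2), ← Real.rpow_mul hf0.le,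
        mul_assoc, ← Real.rpow_add_one hf0.ne']
      congr 1 <;> ring
    rw [← heq]
    have h2 : f ≤ f + 2 * ((n+1:ℕ):ℝ) := by
      have : (0:ℝ) ≤ ((n+1:ℕ):ℝ) := Nat.cast_nonneg _
      linarith
    have hprodnn : (0:ℝ) ≤ ∏ k ∈ Finset.Icc 1 n, (f + 2 * (k : ℝ)) :=
      Finset.prod_nonneg (fun i _ => by positivity)
    exact mul_le_mul h1 h2 hf0.le hprodnn
  -- assemble
  rw [Finset.prod_inv_distrib]
  have hP : (0:ℝ) < (2:ℝ) ^ (3*(M-1)/2) * f ^ ((M+1)/2) := by positivity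
  have hFpos : (0:ℝ) < f ^ ((M+1)/2) := Real.rpow_pos_of_pos hf0 _
  calc ((w₁ + w₂).factorial : ℝ) / ((w₁.factorial : ℝ) * (w₂.factorial : ℝ)) *
          f ^ ((M + 1) / 2) *
          (∏ k ∈ Finset.Icc 1 (w₁ + w₂), (f + 2 * (k : ℝ)))⁻¹
      ≤ (2:ℝ) ^ M * f ^ ((M + 1) / 2) *
          ((2:ℝ) ^ (3*(M-1)/2) * f ^ ((M+1)/2))⁻¹ := by
        have hnn : (0:ℝ) ≤ ((w₁ + w₂).factorial : ℝ) / ((w₁.factorial : ℝ) * (w₂.factorial : ℝ)) := by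
          positivity
        refine mul_le_mul (mul_le_mul hbin le_rfl hFpos.le (by positivity))
          (inv_anti₀ hP hprod) (by positivity) (by positivity)
    _ = 2 * (2:ℝ) ^ (-(M - 1) / 2) := by
        have h2ne : (2:ℝ) ^ (3*(M-1)/2) ≠ 0 := by positivity
        rw [mul_inv]
        have : (2:ℝ) ^ M * f ^ ((M+1)/2) * (((2:ℝ) ^ (3*(M-1)/2))⁻¹ * (f ^ ((M+1)/2))⁻¹)
            = (2:ℝ) ^ M * ((2:ℝ) ^ (3*(M-1)/2))⁻¹ := by
          field_simp
        rw [this, ← div_eq_mul_inv, ← Real.rpow_sub two_pos,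
          show M - 3*(M-1)/2 = 1 + -(M - 1) / 2 by ring,
          Real.rpow_add two_pos, Real.rpow_one]
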